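/- Let (W,S) be a right-angled Coxeter system such that W is infinite. If (W,S) is irreducible, then there exists s₀ ∈ S such that W^{{s₀}} = {w ∈ W : S(w) = {s₀}} is quasi-dense in W with respect to the word metric. -/

import Mathlib

open List

namespace RACGKey

open scoped Classical

variable {B : Type*} {W : Type*} [Group W] {M : CoxeterMatrix B} (cs : CoxeterSystem M W)

local prefix:100 "σ" => cs.simple
local prefix:100 "π" => cs.wordProd

lemma conj_simple_eq_iff (i : B) (x y : W) : σ i * x * σ i = y ↔ x = σ i * y * σ i := by
  constructor
  · rintro rfl
    simp [← mul_assoc, cs.simple_mul_simple_self, cs.simple_mul_simple_cancel_right]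
  · rintro rfl
    simp [← mul_assoc, cs.simple_mul_simple_self, cs.simple_mul_simple_cancel_right]

/-- The Bjorner–Brenti sign permutation attached to a simple generator. -/
noncomputable def eta (i : B) : Equiv.Perm (W × ℤˣ) where
  toFun p := (σ i * p.1 * σ i, if p.1 = σ i then -p.2 else p.2)
  invFun p := (σ i * p.1 * σ i, if p.1 = σ i then -p.2 else p.2)
  left_inv p := by
    obtain ⟨x, e⟩ := p
    dsimp only
    by_cases h : x = σ i
    · subst h
      simp [← mul_assoc, cs.simple_mul_simple_self, cs.simple_mul_simple_cancel_right]
    · have h2 : ¬ (σ i * x * σ i = σ i) := by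
        rw [conj_simple_eq_iff cs]
        simpa [← mul_assoc, cs.simple_mul_simple_self, cs.simple_mul_simple_cancel_right] using h
      simp [h, h2, ← mul_assoc, cs.simple_mul_simple_self, cs.simple_mul_simple_cancel_right]
  right_inv p := by
    obtain ⟨x, e⟩ := p
    dsimp only
    by_cases h : x = σ i
    · subst h
      simp [← mul_assoc, cs.simple_mul_simple_self, cs.simple_mul_simple_cancel_right]
    · have h2 : ¬ (σ i * x * σ i = σ i) := by
        rw [conj_simple_eq_iff cs]
        simpa [← mul_assoc, cs.simple_mul_simple_self, cs.simple_mul_simple_cancel_right] using h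
      simp [h, h2, ← mul_assoc, cs.simple_mul_simple_self, cs.simple_mul_simple_cancel_right]

lemma eta_apply (i : B) (x : W) (e : ℤˣ) :
    eta cs i (x, e) = (σ i * x * σ i, if x = σ i then -e else e) := rfl

lemma eta_mul_self (i : B) : eta cs i * eta cs i = 1 := by
  ext1 p
  exact (eta cs i).left_inv p

lemma simple_comm_of_two {i j : B} (h : M i j = 2) : σ i * σ j = σ j * σ i := by
  have := cs.simple_mul_simple_pow i j
  rw [h, pow_two] at this
  have h1 : σ i * σ j = (σ i * σ j)⁻¹ := by
    rw [eq_inv_iff_mul_eq_one]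
    exact this
  rw [h1, mul_inv_rev, cs.inv_simple, cs.inv_simple]

lemma eta_comm {i j : B} (h : σ i * σ j = σ j * σ i) :
    eta cs i * eta cs j = eta cs j * eta cs i := by
  ext1 p
  obtain ⟨x, e⟩ := p
  simp only [Equiv.Perm.mul_apply, eta_apply]
  have c1 : (σ j * x * σ j = σ i) ↔ x = σ i := by
    rw [conj_simple_eq_iff cs]
    constructor
    · rintro rfl
      rw [show σ j * σ i * σ j = σ i * σ j * σ j by rw [h], cs.simple_mul_simple_cancel_right]
    · rintro rfl
      rw [show σ j * σ i * σ j = σ i * σ j * σ j by rw [h], cs.simple_mul_simple_cancel_right]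
  have c2 : (σ i * x * σ i = σ j) ↔ x = σ j := by
    rw [conj_simple_eq_iff cs]
    constructor
    · rintro rfl
      rw [show σ i * σ j * σ i = σ j * σ i * σ i by rw [h], cs.simple_mul_simple_cancel_right]
    · rintro rfl
      rw [show σ i * σ j * σ i = σ j * σ i * σ i by rw [h], cs.simple_mul_simple_cancel_right]
  rw [Prod.ext_iff]
  constructor
  · show σ i * (σ j * x * σ j) * σ i = σ j * (σ i * x * σ i) * σ j
    have e1 : σ i * (σ j * x * σ j) * σ i = (σ i * σ j) * x * (σ j * σ i) := by group
    have e2 : σ j * (σ i * x * σ i) * σ j = (σ j * σ i) * x * (σ i * σ j) := by group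
    rw [e1, e2, h]
  · show (if σ j * x * σ j = σ i then -(if x = σ j then -e else e) else (if x = σ j then -e else e))
      = (if σ i * x * σ i = σ j then -(if x = σ i then -e else e) else (if x = σ i then -e else e))
    rw [if_congr c1 rfl rfl, if_congr c2 rfl rfl]
    by_cases h1 : x = σ i <;> by_cases h2 : x = σ j
    · have hij : σ i = σ j := by rw [← h1, h2]
      simp [h1, h2, hij]
    · have hij : σ i ≠ σ j := fun hh => h2 (h1.trans hh)
      simp [h1, h2, hij, hij.symm]
    · have hij : σ j ≠ σ i := fun hh => h1 (h2.trans hh)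
      simp [h1, h2, hij, hij.symm]
    · simp [h1, h2]

section Sign

variable (hra : ∀ s t : B, s ≠ t → M s t = 2 ∨ M s t = 0)

include hra

lemma eta_liftable : M.IsLiftable (fun i => eta cs i) := by
  intro i j
  by_cases hij : i = j
  · subst hij
    rw [M.diagonal i, pow_one]
    exact eta_mul_self cs i
  · rcases hra i j hij with h | h
    · rw [h, pow_two, show (fun i => eta cs i) i * (fun i => eta cs i) j * ((fun i => eta cs i) i * (fun i => eta cs i) j) = eta cs i * ((eta cs j * eta cs i) * eta cs j) by group]
      rw [← eta_comm cs (simple_comm_of_two cs h)]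
      rw [show eta cs i * (eta cs i * eta cs j * eta cs j) = (eta cs i * eta cs i) * (eta cs j * eta cs j) by group]
      rw [eta_mul_self, eta_mul_self, one_mul]
    · rw [h, pow_zero]

/-- The sign representation `W →* Perm (W × ℤˣ)`. -/
noncomputable def Phi : W →* Equiv.Perm (W × ℤˣ) := cs.lift ⟨fun i => eta cs i, eta_liftable cs hra⟩

lemma Phi_simple (i : B) : Phi cs hra (σ i) = eta cs i := cs.lift_apply_simple _ i

omit hra in
lemma ris_cons (i : B) (ω : List B) :
    cs.rightInvSeq (i :: ω) = ((π ω)⁻¹ * σ i * π ω) :: cs.rightInvSeq ω := rfl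

lemma Phi_wordProd (ω : List B) (x : W) (e : ℤˣ) :
    Phi cs hra (π ω) (x, e) =
      (π ω * x * (π ω)⁻¹, e * (-1) ^ ((cs.rightInvSeq ω).count x)) := by
  induction ω generalizing x e with
  | nil => simp
  | cons i ω ih =>
    rw [cs.wordProd_cons, map_mul, Equiv.Perm.mul_apply, ih, Phi_simple, eta_apply, ris_cons]
    have hcond : (π ω * x * (π ω)⁻¹ = σ i) ↔ (x = (π ω)⁻¹ * σ i * π ω) := by
      constructor
      · intro hh
        rw [← hh]
        group
      · intro hh
        rw [hh]
        group
    rw [Prod.ext_iff]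
    constructor
    · show σ i * (π ω * x * (π ω)⁻¹) * σ i = π (i :: ω) * x * (π (i :: ω))⁻¹
      rw [cs.wordProd_cons, mul_inv_rev, cs.inv_simple]
      group
    · show (if π ω * x * (π ω)⁻¹ = σ i then -(e * (-1) ^ ((cs.rightInvSeq ω).count x))
          else e * (-1) ^ ((cs.rightInvSeq ω).count x))
        = e * (-1) ^ (((((π ω)⁻¹ * σ i * π ω)) :: cs.rightInvSeq ω).count x)
      rw [if_congr hcond rfl rfl, List.count_cons]
      simp only [beq_iff_eq]
      by_cases hx : x = (π ω)⁻¹ * σ i * π ω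
      · rw [if_pos hx, if_pos hx.symm, pow_succ, ← mul_assoc, mul_neg_one]
      · rw [if_neg hx, if_neg (fun h => hx h.symm), add_zero]

/-- The sign of a "reflection-like" element `x` with respect to `w`. -/
noncomputable def sgn (w x : W) : ℤˣ := (Phi cs hra w (x, 1)).2

lemma sgn_wordProd (ω : List B) (x : W) :
    sgn cs hra (π ω) x = (-1) ^ ((cs.rightInvSeq ω).count x) := by
  rw [sgn, Phi_wordProd, one_mul]

lemma Phi_apply (w x : W) (e : ℤˣ) :
    Phi cs hra w (x, e) = (w * x * w⁻¹, e * sgn cs hra w x) := by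
  obtain ⟨ω, rfl⟩ := cs.wordProd_surjective w
  rw [Phi_wordProd, sgn_wordProd]

lemma sgn_mul (u v x : W) :
    sgn cs hra (u * v) x = sgn cs hra v x * sgn cs hra u (v * x * v⁻¹) := by
  have := congrArg Prod.snd (congrArg (fun g => g (x, (1:ℤˣ))) (map_mul (Phi cs hra) u v))
  simp only [Equiv.Perm.mul_apply] at this
  rw [sgn, this, Phi_apply, Phi_apply]
  simp

lemma sgn_descent (w : W) (c : B) (hc : cs.IsRightDescent w c) : sgn cs hra w (σ c) = -1 := by
  have hl : cs.length (w * σ c) + 1 = cs.length w := cs.isRightDescent_iff.mp hc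
  obtain ⟨ω₁, hred₁, hπ₁⟩ := cs.exists_reduced_word' (w * σ c)
  have hπ₂ : π (ω₁.concat c) = w := by
    rw [cs.wordProd_concat, ← hπ₁, cs.simple_mul_simple_cancel_right]
  have hred₂ : cs.IsReduced (ω₁.concat c) := by
    unfold CoxeterSystem.IsReduced
    rw [hπ₂, List.length_concat]
    unfold CoxeterSystem.IsReduced at hred₁
    rw [← hred₁, ← hπ₁, hl]
  have hnd := hred₂.nodup_rightInvSeq
  rw [cs.rightInvSeq_concat] at hnd
  have hmem : σ c ∉ (List.map (⇑(MulAut.conj (σ c))) (cs.rightInvSeq ω₁)) := by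
    rw [List.concat_eq_append, List.nodup_append] at hnd
    intro hmm
    exact hnd.2.2 _ hmm _ (List.mem_singleton_self _) rfl
  have hcount : ((List.map (⇑(MulAut.conj (σ c))) (cs.rightInvSeq ω₁)).concat (σ c)).count (σ c) = 1 := by
    rw [List.concat_eq_append, List.count_append, List.count_eq_zero_of_not_mem hmem]
    simp
  rw [← hπ₂, sgn_wordProd, cs.rightInvSeq_concat, hcount, pow_one]

lemma descent_of_sgn_neg (w : W) (c : B) (hs : sgn cs hra w (σ c) = -1) :
    cs.IsRightDescent w c := by
  obtain ⟨ω, hred, hπ⟩ := cs.exists_reduced_word' w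
  rw [hπ, sgn_wordProd] at hs
  have hcnt : (cs.rightInvSeq ω).count (σ c) ≠ 0 := by
    intro h0
    rw [h0, pow_zero] at hs
    exact absurd hs (by decide)
  have hmem : σ c ∈ cs.rightInvSeq ω := by
    rw [← List.count_pos_iff]
    omega
  have := cs.isRightInversion_of_mem_rightInvSeq hred hmem
  rw [hπ]
  exact this.2

lemma descent_iff_sgn (w : W) (c : B) :
    cs.IsRightDescent w c ↔ sgn cs hra w (σ c) = -1 := by
  constructor
  · exact sgn_descent cs hra w c
  · exact descent_of_sgn_neg cs hra w c

lemma mem_ris_of_descent {w : W} {c : B} (hc : cs.IsRightDescent w c)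
    {ω : List B} (hred : cs.IsReduced ω) (hπ : π ω = w) : σ c ∈ cs.rightInvSeq ω := by
  have hs := sgn_descent cs hra w c hc
  rw [← hπ, sgn_wordProd] at hs
  have : ¬ Even ((cs.rightInvSeq ω).count (σ c)) := by
    intro hev
    rw [hev.neg_one_pow] at hs
    exact absurd hs (by decide)
  have hcnt : (cs.rightInvSeq ω).count (σ c) ≠ 0 := fun h0 => this (by simp [h0])
  rw [← List.count_pos_iff]
  omega

lemma exchange {w : W} {c : B} (hc : cs.IsRightDescent w c)
    {ω : List B} (hred : cs.IsReduced ω) (hπ : π ω = w) :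
    ∃ j < ω.length, w * σ c = π (ω.eraseIdx j) := by
  have hmem := mem_ris_of_descent cs hra hc hred hπ
  obtain ⟨j, hj, heq⟩ := List.mem_iff_getElem.mp hmem
  refine ⟨j, by simpa using hj, ?_⟩
  rw [← hπ, ← cs.wordProd_mul_getD_rightInvSeq ω j]
  congr 1
  rw [List.getD_eq_getElem _ _ hj, heq]

end Sign

section Dihedral

/-- The affine permutation `x ↦ a + e * x` of `ℤ`. -/
def affP (a : ℤ) (e : ℤˣ) : Equiv.Perm ℤ where
  toFun x := a + e * x
  invFun x := e * (x - a)
  left_inv x := by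
    have he : (e : ℤ) * e = 1 := by
      rw [← Units.val_mul, Int.units_mul_self e, Units.val_one]
    dsimp only
    rw [add_sub_cancel_left, ← mul_assoc, he, one_mul]
  right_inv x := by
    have he : (e : ℤ) * e = 1 := by
      rw [← Units.val_mul, Int.units_mul_self e, Units.val_one]
    dsimp only
    have h2 : (e : ℤ) * (e * (x - a)) = x - a := by rw [← mul_assoc, he, one_mul]
    rw [h2, add_sub_cancel]

lemma affP_apply (a : ℤ) (e : ℤˣ) (x : ℤ) : affP a e x = a + e * x := rfl

lemma affP_mul (a b : ℤ) (e d : ℤˣ) : affP a e * affP b d = affP (a + e * b) (e * d) := by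
  ext x
  simp only [Equiv.Perm.mul_apply, affP_apply, Units.val_mul]
  ring

lemma affP_one : affP 0 1 = 1 := by
  ext x
  simp [affP_apply]

/-- Dihedral length proxy. -/
def nuP (g : Equiv.Perm ℤ) : ℕ := if g 1 - g 0 = 1 then 2 * (g 0).natAbs else (2 * (g 0) - 1).natAbs

lemma nuP_affP (a : ℤ) (e : ℤˣ) :
    nuP (affP a e) = if e = 1 then 2 * a.natAbs else (2 * a - 1).natAbs := by
  unfold nuP
  have h1 : affP a e 1 - affP a e 0 = (e : ℤ) := by
    simp [affP_apply]
  have h0 : affP a e 0 = a := by simp [affP_apply]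
  rw [h1, h0]
  have : ((e : ℤ) = 1) ↔ (e = 1) := by
    constructor
    · intro h; ext; exact h
    · intro h; rw [h]; rfl
  rw [if_congr this rfl rfl]

variable {t u : B}

/-- Generator assignment for the infinite-dihedral quotient killing all letters but `t`, `u`. -/
noncomputable def dmap (t u : B) : B → Equiv.Perm ℤ :=
  fun i => if i = t then affP 0 (-1) else if i = u then affP 1 (-1) else 1

lemma dmap_sq (t u : B) (k : B) : dmap t u k * dmap t u k = 1 := by
  unfold dmap
  split_ifs
  · rw [affP_mul]
    norm_num [affP_one]
  · rw [affP_mul]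
    norm_num [affP_one]
  · rw [one_mul]

lemma dmap_liftable (hra : ∀ s t : B, s ≠ t → M s t = 2 ∨ M s t = 0) (htu : M t u = 0) :
    M.IsLiftable (dmap t u) := by
  intro a b
  by_cases hab : a = b
  · subst hab
    rw [M.diagonal a, pow_one]
    exact dmap_sq t u a
  rcases hra a b hab with h2 | h0
  · have key : dmap t u a = 1 ∨ dmap t u b = 1 := by
      by_contra hcon
      push_neg at hcon
      obtain ⟨ha1, hb1⟩ := hcon
      have ha : a = t ∨ a = u := by
        unfold dmap at ha1
        by_contra hc
        push_neg at hc
        rw [if_neg hc.1, if_neg hc.2] at ha1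
        exact ha1 rfl
      have hb : b = t ∨ b = u := by
        unfold dmap at hb1
        by_contra hc
        push_neg at hc
        rw [if_neg hc.1, if_neg hc.2] at hb1
        exact hb1 rfl
      rcases ha with rfl | rfl <;> rcases hb with rfl | rfl
      · exact hab rfl
      · rw [htu] at h2
        exact absurd h2 (by norm_num)
      · have hsy : M.M a b = M.M b a := Matrix.IsSymm.apply M.isSymm b a
        rw [hsy, htu] at h2
        exact absurd h2 (by norm_num)
      · exact hab rfl
    rw [h2, pow_two]
    rcases key with hk | hk
    · rw [hk, one_mul]
      exact dmap_sq t u b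
    · rw [hk, mul_one]
      exact dmap_sq t u a
  · rw [h0, pow_zero]

variable (hra : ∀ s t : B, s ≠ t → M s t = 2 ∨ M s t = 0) (htu : M t u = 0)

/-- The infinite dihedral quotient homomorphism. -/
noncomputable def psiD (t u : B) (hra : ∀ s t : B, s ≠ t → M s t = 2 ∨ M s t = 0)
    (htu : M t u = 0) : W →* Equiv.Perm ℤ :=
  cs.lift ⟨dmap t u, dmap_liftable hra htu⟩

lemma psiD_simple (i : B) : psiD cs t u hra htu (σ i) = dmap t u i := cs.lift_apply_simple _ i

include htu in
lemma t_ne_u : t ≠ u := by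
  intro h
  rw [h, M.diagonal u] at htu
  exact one_ne_zero htu

include hra htu in
lemma psiD_word_le (χ : List B) (hχ : ∀ c ∈ χ, c = t ∨ c = u) :
    ∃ a e, psiD cs t u hra htu (π χ) = affP a e ∧ nuP (affP a e) ≤ χ.length := by
  induction χ with
  | nil =>
    refine ⟨0, 1, ?_, ?_⟩
    · rw [cs.wordProd_nil, map_one, affP_one]
    · rw [nuP_affP]
      simp
  | cons c χ ih =>
    obtain ⟨a, e, h1, h2⟩ := ih (fun c hc => hχ c (List.mem_cons_of_mem _ hc))
    rw [nuP_affP] at h2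
    have hc := hχ c List.mem_cons_self
    have hne := t_ne_u (M := M) htu
    rw [cs.wordProd_cons, map_mul, psiD_simple, h1]
    rcases hc with rfl | rfl
    · rw [show dmap c u c = affP 0 (-1) by unfold dmap; rw [if_pos rfl], affP_mul]
      refine ⟨_, _, rfl, ?_⟩
      rw [nuP_affP]
      rcases Int.units_eq_one_or e with rfl | rfl
      · rw [if_neg (by decide)]
        rw [if_pos rfl] at h2
        simp only [Units.val_neg, Units.val_one, List.length_cons]
        omega
      · rw [if_pos (by decide)]
        rw [if_neg (by decide)] at h2
        simp only [Units.val_neg, Units.val_one, List.length_cons] at h2 ⊢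
        omega
    · rw [show dmap t c c = affP 1 (-1) by unfold dmap; rw [if_neg (Ne.symm hne), if_pos rfl],
        affP_mul]
      refine ⟨_, _, rfl, ?_⟩
      rw [nuP_affP]
      rcases Int.units_eq_one_or e with rfl | rfl
      · rw [if_neg (by decide)]
        rw [if_pos rfl] at h2
        simp only [Units.val_neg, Units.val_one, List.length_cons]
        omega
      · rw [if_pos (by decide)]
        rw [if_neg (by decide)] at h2
        simp only [Units.val_neg, Units.val_one, List.length_cons] at h2 ⊢
        omega

/-- Closed form coefficient for alternating words. -/
noncomputable def altA (t u : B) (χ : List B) : ℤ :=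
  if χ.head? = some t then -((χ.length : ℤ) / 2)
  else if χ.head? = some u then ((χ.length : ℤ) + 1) / 2
  else 0

lemma nuP_form (m : ℕ) (a : ℤ) (ha : a = -((m : ℤ) / 2) ∨ a = ((m : ℤ) + 1) / 2) :
    nuP (affP a ((-1) ^ m)) = m := by
  rw [nuP_affP]
  rcases Nat.even_or_odd m with hm | hm
  · rw [if_pos hm.neg_one_pow]
    obtain ⟨k, hk⟩ := hm
    rcases ha with rfl | rfl <;> omega
  · rw [if_neg (by rw [hm.neg_one_pow]; decide)]
    obtain ⟨k, hk⟩ := hm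
    rcases ha with rfl | rfl <;> omega

include hra htu in
lemma psiD_alt (χ : List B) (hch : χ.Chain' (· ≠ ·)) (hχ : ∀ c ∈ χ, c = t ∨ c = u) :
    psiD cs t u hra htu (π χ) = affP (altA t u χ) ((-1) ^ χ.length) ∧
      nuP (psiD cs t u hra htu (π χ)) = χ.length := by
  have hne := t_ne_u (M := M) htu
  have main : psiD cs t u hra htu (π χ) = affP (altA t u χ) ((-1) ^ χ.length) := by
    induction χ with
    | nil =>
      rw [cs.wordProd_nil, map_one]
      unfold altA
      simp [affP_one]
    | cons c χ ih =>
      have hc := hχ c List.mem_cons_self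
      have h1 : psiD cs t u hra htu (π χ) = affP (altA t u χ) ((-1) ^ χ.length) :=
        ih hch.tail (fun c hc => hχ c (List.mem_cons_of_mem _ hc))
      rw [cs.wordProd_cons, map_mul, psiD_simple, h1]
      have hsgn : ((-1 : ℤˣ)) * (-1) ^ χ.length = (-1) ^ (c :: χ).length := by
        rw [List.length_cons, pow_succ, mul_comm]
      rcases hc with rfl | rfl
      · have hd : dmap c u c = affP 0 (-1) := by
          unfold dmap
          rw [if_pos rfl]
        rw [hd, affP_mul, hsgn]
        congr 1
        have hAc : altA c u (c :: χ) = -(((c :: χ).length : ℤ) / 2) := by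
          unfold altA
          rw [List.head?_cons, if_pos rfl]
        rw [hAc]
        cases χ with
        | nil =>
          unfold altA
          simp
        | cons c' χ' =>
          have hc'c : c ≠ c' := (List.isChain_cons_cons.mp hch).1
          have hc'u : c' = u := by
            rcases hχ c' (by simp) with rfl | h
            · exact absurd rfl hc'c
            · exact h
          subst hc'u
          have hA : altA c c' (c' :: χ') = (((c' :: χ').length : ℤ) + 1) / 2 := by
            unfold altA
            rw [List.head?_cons, if_neg (by simp [Ne.symm hc'c]), if_pos rfl]
          rw [hA]
          simp only [Units.val_neg, Units.val_one, List.length_cons]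
          push_cast
          omega
      · have hd : dmap t c c = affP 1 (-1) := by
          unfold dmap
          rw [if_neg (Ne.symm hne), if_pos rfl]
        rw [hd, affP_mul, hsgn]
        congr 1
        have hAc : altA t c (c :: χ) = (((c :: χ).length : ℤ) + 1) / 2 := by
          unfold altA
          rw [List.head?_cons, if_neg (by simp only [Option.some.injEq]; exact Ne.symm hne), if_pos rfl]
        rw [hAc]
        cases χ with
        | nil =>
          unfold altA
          simp
        | cons c' χ' =>
          have hc'c : c ≠ c' := (List.isChain_cons_cons.mp hch).1
          have hc't : c' = t := by
            rcases hχ c' (by simp) with h | rfl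
            · exact h
            · exact absurd rfl hc'c
          subst hc't
          have hA : altA c' c (c' :: χ') = -((((c' :: χ').length : ℤ)) / 2) := by
            unfold altA
            rw [List.head?_cons, if_pos rfl]
          rw [hA]
          simp only [Units.val_neg, Units.val_one, List.length_cons]
          push_cast
          omega
  refine ⟨main, ?_⟩
  rw [main]
  apply nuP_form
  unfold altA
  cases χ with
  | nil => simp
  | cons c χ' =>
    rw [List.head?_cons]
    by_cases hct : c = t
    · rw [if_pos (by rw [hct])]
      left
      rfl
    · rw [if_neg (by simpa using hct)]
      have hcu : c = u := by
        rcases hχ c (by simp) with h | h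
        · exact absurd h hct
        · exact h
      rw [if_pos (by rw [hcu])]
      right
      rfl

include hra htu in
lemma alt_min {χ χ₂ : List B} (hch : χ.Chain' (· ≠ ·)) (hχ : ∀ c ∈ χ, c = t ∨ c = u)
    (hχ₂ : ∀ c ∈ χ₂, c = t ∨ c = u) (heq : π χ = π χ₂) : χ.length ≤ χ₂.length := by
  obtain ⟨a, e, h1, h2⟩ := psiD_word_le cs hra htu χ₂ hχ₂
  obtain ⟨_, h4⟩ := psiD_alt cs hra htu χ hch hχ
  rw [heq, h1] at h4
  omega

end Dihedral

section Star

omit [Group W] in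
lemma not_chain'_split : ∀ (χ : List B), ¬ χ.Chain' (fun a b => a ≠ b) →
    ∃ A c Bb, χ = A ++ c :: c :: Bb := by
  intro χ
  induction χ with
  | nil => intro h; exact absurd List.isChain_nil h
  | cons c χ ih =>
    intro h
    cases χ with
    | nil => exact absurd (List.isChain_singleton c) h
    | cons c2 rest =>
      by_cases hcc : c = c2
      · exact ⟨[], c, rest, by rw [← hcc]; rfl⟩
      · have h2 : ¬ (c2 :: rest).Chain' (fun a b => a ≠ b) := by
          intro hch
          exact h (List.isChain_cons_cons.mpr ⟨hcc, hch⟩)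
        obtain ⟨A, c0, Bb, hABb⟩ := ih h2
        exact ⟨c :: A, c0, Bb, by rw [List.cons_append, ← hABb]⟩

lemma cancel_pair (A Bb : List B) (c : B) : π (A ++ c :: c :: Bb) = π (A ++ Bb) := by
  rw [cs.wordProd_append, cs.wordProd_append, cs.wordProd_cons, cs.wordProd_cons,
    cs.simple_mul_simple_cancel_left]

lemma exists_alt_rep {t u : B} : ∀ (n : ℕ) (χ : List B), χ.length ≤ n →
    (∀ c ∈ χ, c = t ∨ c = u) →
    ∃ χ', χ'.Chain' (fun a b => a ≠ b) ∧ (∀ c ∈ χ', c = t ∨ c = u) ∧ π χ' = π χ ∧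
      χ'.length ≤ χ.length := by
  intro n
  induction n with
  | zero =>
    intro χ hlen hχ
    have : χ = [] := List.eq_nil_of_length_eq_zero (Nat.le_zero.mp hlen)
    subst this
    exact ⟨[], List.isChain_nil, by simp, rfl, le_refl _⟩
  | succ n ih =>
    intro χ hlen hχ
    by_cases hch : χ.Chain' (fun a b => a ≠ b)
    · exact ⟨χ, hch, hχ, rfl, le_refl _⟩
    · obtain ⟨A, c, Bb, hsplit⟩ := not_chain'_split χ hch
      have hlen2 : (A ++ Bb).length ≤ n := by
        subst hsplit
        simp only [List.length_append, List.length_cons] at hlen ⊢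
        omega
      have hent : ∀ c' ∈ A ++ Bb, c' = t ∨ c' = u := by
        intro c' hc'
        apply hχ
        subst hsplit
        rcases List.mem_append.mp hc' with h | h
        · exact List.mem_append.mpr (Or.inl h)
        · exact List.mem_append.mpr (Or.inr (List.mem_cons_of_mem _ (List.mem_cons_of_mem _ h)))
      obtain ⟨χ', h1, h2, h3, h4⟩ := ih (A ++ Bb) hlen2 hent
      refine ⟨χ', h1, h2, ?_, ?_⟩
      · rw [h3, hsplit, cancel_pair]
      · subst hsplit
        simp only [List.length_append, List.length_cons] at h4 ⊢
        omega

variable (hra : ∀ s t : B, s ≠ t → M s t = 2 ∨ M s t = 0)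

include hra in
/-- Key structural fact: no element of a right-angled Coxeter group has two right descents
that do not commute. -/
lemma star {i j : B} (hij0 : M i j = 0) (v : W) :
    ¬ (cs.IsRightDescent v i ∧ cs.IsRightDescent v j) := by
  rintro ⟨hdi, hdj⟩
  classical
  set Cos : Set W := {x | ∃ χ : List B, (∀ c ∈ χ, c = i ∨ c = j) ∧ x = v * π χ} with hCos
  have hvCos : v ∈ Cos := ⟨[], by simp, by simp⟩
  -- minimal length element of the coset
  have hne : (cs.length '' Cos).Nonempty := ⟨cs.length v, Set.mem_image_of_mem _ hvCos⟩
  obtain ⟨x₀, hx₀Cos, hx₀len⟩ := Nat.sInf_mem hne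
  have hmin : ∀ y ∈ Cos, cs.length x₀ ≤ cs.length y := by
    intro y hy
    rw [hx₀len]
    exact Nat.sInf_le (Set.mem_image_of_mem _ hy)
  -- the coset claim
  have claim : ∀ χ : List B, χ.Chain' (fun a b => a ≠ b) → (∀ c ∈ χ, c = i ∨ c = j) →
      cs.length (x₀ * π χ) = cs.length x₀ + χ.length := by
    intro χ
    induction χ using List.reverseRecOn with
    | nil => intro _ _; simp
    | append_singleton χ' c ihχ =>
      intro hch hent
      have hch' : χ'.Chain' (fun a b => a ≠ b) := (List.isChain_append.mp hch).1
      have hent' : ∀ c' ∈ χ', c' = i ∨ c' = j := fun c' hc' => hent c' (by simp [hc'])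
      have ihv := ihχ hch' hent'
      have hpi : π (χ' ++ [c]) = π χ' * σ c := by
        rw [cs.wordProd_append, cs.wordProd_singleton]
      by_cases hdc : cs.IsRightDescent (x₀ * π χ') c
      · exfalso
        obtain ⟨ωx, hredx, hπx⟩ := cs.exists_reduced_word' x₀
        have hπword : π (ωx ++ χ') = x₀ * π χ' := by
          rw [cs.wordProd_append, ← hπx]
        have hredword : cs.IsReduced (ωx ++ χ') := by
          unfold CoxeterSystem.IsReduced
          rw [hπword, ihv, List.length_append]
          unfold CoxeterSystem.IsReduced at hredx
          rw [← hredx, ← hπx]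
        obtain ⟨k, hk, heq⟩ := exchange cs hra hdc hredword hπword
        by_cases hkx : k < ωx.length
        · have herase : (ωx ++ χ').eraseIdx k = ωx.eraseIdx k ++ χ' :=
            List.eraseIdx_append_of_lt_length hkx _
          rw [herase, cs.wordProd_append] at heq
          -- y = π (ωx.eraseIdx k) is in the coset and shorter than x₀
          obtain ⟨χ₀, hχ₀ent, hχ₀eq⟩ := hx₀Cos
          have hyCos : π (ωx.eraseIdx k) ∈ Cos := by
            refine ⟨χ₀ ++ (χ' ++ [c] ++ χ'.reverse), ?_, ?_⟩
            · intro c' hc'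
              rcases List.mem_append.mp hc' with h | h
              · exact hχ₀ent c' h
              · rcases List.mem_append.mp h with h' | h'
                · rcases List.mem_append.mp h' with h'' | h''
                  · exact hent' c' h''
                  · rw [List.mem_singleton.mp h'']
                    exact hent c (by simp)
                · exact hent' c' (List.mem_reverse.mp h')
            · have hres : π (ωx.eraseIdx k) = x₀ * π χ' * σ c * (π χ')⁻¹ := by
                rw [heq, mul_inv_cancel_right]
              rw [hres, hχ₀eq]
              rw [cs.wordProd_append, cs.wordProd_append, cs.wordProd_append,
                cs.wordProd_singleton, cs.wordProd_reverse]
              group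
          have hlt : cs.length (π (ωx.eraseIdx k)) < cs.length x₀ := by
            calc cs.length (π (ωx.eraseIdx k)) ≤ (ωx.eraseIdx k).length :=
                  cs.length_wordProd_le _
            _ ≤ ωx.length - 1 := by
                  have := List.length_eraseIdx_add_one hkx
                  omega
            _ < ωx.length := by
                  have : 0 < ωx.length := by omega
                  omega
            _ = cs.length x₀ := by
                  unfold CoxeterSystem.IsReduced at hredx
                  rw [← hredx, ← hπx]
          exact absurd (hmin _ hyCos) (by omega)
        · push_neg at hkx
          have herase : (ωx ++ χ').eraseIdx k = ωx ++ χ'.eraseIdx (k - ωx.length) :=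
            List.eraseIdx_append_of_length_le hkx _
          rw [herase, cs.wordProd_append, ← hπx] at heq
          have hcancel : π χ' * σ c = π (χ'.eraseIdx (k - ωx.length)) := by
            have := heq
            rw [mul_assoc] at this
            exact mul_left_cancel this
          have hπeq : π (χ' ++ [c]) = π (χ'.eraseIdx (k - ωx.length)) := by
            rw [hpi, hcancel]
          have herent : ∀ c' ∈ χ'.eraseIdx (k - ωx.length), c' = i ∨ c' = j := by
            intro c' hc'
            exact hent' c' ((List.eraseIdx_sublist χ' (k - ωx.length)).subset hc')
          have hlemin := alt_min cs hra hij0 hch (fun c' hc' => hent c' hc') herent hπeq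
          have hklt : k - ωx.length < χ'.length := by
            rw [List.length_append] at hk
            omega
          have : (χ'.eraseIdx (k - ωx.length)).length = χ'.length - 1 :=
            List.length_eraseIdx_of_lt hklt
          rw [List.length_append, List.length_singleton] at hlemin
          omega
      · rw [hpi, ← mul_assoc]
        rw [cs.not_isRightDescent_iff.mp hdc, ihv, List.length_append]
        simp only [List.length_singleton]
        omega
  -- v itself is x₀ times an alternating word
  obtain ⟨χ₀, hχ₀ent, hχ₀eq⟩ := hx₀Cos
  have hvx : v = x₀ * π (χ₀.reverse) := by
    rw [hχ₀eq, cs.wordProd_reverse]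
    group
  obtain ⟨χ, hχch, hχent, hχπ, _⟩ := exists_alt_rep cs (t := i) (u := j) χ₀.reverse.length χ₀.reverse
    (le_refl _) (fun c hc => hχ₀ent c (List.mem_reverse.mp hc))
  have hv : v = x₀ * π χ := by rw [hvx, hχπ]
  have hlv : cs.length v = cs.length x₀ + χ.length := by
    rw [hv]
    exact claim χ hχch hχent
  -- choose a letter to extend the alternating word
  rcases List.eq_nil_or_concat χ with rfl | ⟨χ'', c, rfl⟩
  · -- v = x₀ minimal; appending i must increase length, contradicting the descent at i
    have h1 : cs.length (v * σ i) = cs.length v + 1 := by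
      have := claim [i] (List.isChain_singleton i) (by simp)
      rw [cs.wordProd_singleton] at this
      rw [hv]
      simpa using this
    have := hdi
    unfold CoxeterSystem.IsRightDescent at this
    omega
  · rw [List.concat_eq_append] at hχch hχent hv hlv
    have hc : c = i ∨ c = j := hχent c (by simp)
    have hijne : i ≠ j := by
      intro h
      rw [h, M.diagonal j] at hij0
      exact one_ne_zero hij0
    -- let c' be the other letter
    obtain ⟨c', hc', hcne⟩ : ∃ c', (c' = i ∨ c' = j) ∧ c ≠ c' := by
      rcases hc with rfl | rfl
      · exact ⟨j, Or.inr rfl, hijne⟩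
      · exact ⟨i, Or.inl rfl, Ne.symm hijne⟩
    have hchext : ((χ'' ++ [c]) ++ [c']).Chain' (fun a b => a ≠ b) := by
      unfold List.Chain'
      rw [List.isChain_append]
      refine ⟨hχch, List.isChain_singleton c', ?_⟩
      intro x hx y hy
      rw [List.getLast?_concat] at hx
      rw [List.head?_cons] at hy
      cases hx
      cases hy
      exact hcne
    have hextent : ∀ c'' ∈ (χ'' ++ [c]) ++ [c'], c'' = i ∨ c'' = j := by
      intro c'' hc''
      rcases List.mem_append.mp hc'' with h | h
      · exact hχent c'' h
      · rw [List.mem_singleton.mp h]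
        exact hc'
    have h2 : cs.length (v * σ c') = cs.length v + 1 := by
      have hcl := claim _ hchext hextent
      rw [cs.wordProd_append (χ'' ++ [c]) [c'], cs.wordProd_singleton, ← mul_assoc,
        ← hv] at hcl
      rw [hcl, hlv]
      simp only [List.length_append, List.length_singleton]
      omega
    have hdc' : cs.IsRightDescent v c' := by
      rcases hc' with rfl | rfl
      · exact hdi
      · exact hdj
    unfold CoxeterSystem.IsRightDescent at hdc'
    omega

end Star

section Descents

variable (hra : ∀ s t : B, s ≠ t → M s t = 2 ∨ M s t = 0)

lemma chi_liftable (i₀ : B) (hra : ∀ s t : B, s ≠ t → M s t = 2 ∨ M s t = 0) :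
    M.IsLiftable (fun k => if k = i₀ then (-1 : ℤˣ) else 1) := by
  intro a b
  by_cases hab : a = b
  · subst hab
    rw [M.diagonal a, pow_one]
    simp only []
    split_ifs <;> decide
  · rcases hra a b hab with h2 | h0
    · rw [h2, pow_two]
      simp only []
      split_ifs <;> decide
    · rw [h0, pow_zero]

include hra in
lemma simple_injective {a b : B} (hab : a ≠ b) : σ a ≠ σ b := by
  intro h
  have hc := congrArg (cs.lift ⟨fun k => if k = a then (-1 : ℤˣ) else 1, chi_liftable a hra⟩) h
  rw [cs.lift_apply_simple, cs.lift_apply_simple] at hc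
  rw [if_pos rfl, if_neg (Ne.symm hab)] at hc
  exact absurd hc (by decide)

lemma descent_mul_self {w : W} {c : B} (hc : ¬ cs.IsRightDescent w c) :
    cs.IsRightDescent (w * σ c) c := by
  have h1 : cs.length (w * σ c) = cs.length w + 1 := cs.not_isRightDescent_iff.mp hc
  unfold CoxeterSystem.IsRightDescent
  rw [cs.simple_mul_simple_cancel_right]
  omega

include hra in
lemma descent_mul_iff {w : W} {c i : B} (hic : i ≠ c) (hM : M i c = 2) :
    cs.IsRightDescent (w * σ c) i ↔ cs.IsRightDescent w i := by
  have hcomm : σ i * σ c = σ c * σ i := simple_comm_of_two cs hM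
  have hconj : σ c * σ i * (σ c)⁻¹ = σ i := by
    rw [cs.inv_simple, ← hcomm, cs.simple_mul_simple_cancel_right]
  have hsgn1 : sgn cs hra (σ c) (σ i) = 1 := by
    rw [show σ c = π [c] by rw [cs.wordProd_singleton], sgn_wordProd, cs.rightInvSeq_singleton]
    rw [List.count_singleton']
    rw [if_neg (by simpa using (simple_injective cs hra hic).symm)]
    rfl
  have hkey : sgn cs hra (w * σ c) (σ i) = sgn cs hra w (σ i) := by
    rw [sgn_mul, hconj, hsgn1, one_mul]
  rw [descent_iff_sgn cs hra, descent_iff_sgn cs hra, hkey]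

include hra in
lemma descent_mul_of {w : W} {c i : B} (hc : ¬ cs.IsRightDescent w c)
    (hi : cs.IsRightDescent (w * σ c) i) (hic : i ≠ c) :
    M i c = 2 ∧ cs.IsRightDescent w i := by
  have hcc : cs.IsRightDescent (w * σ c) c := descent_mul_self cs hc
  have hM : M i c = 2 := by
    rcases hra i c hic with h | h
    · exact h
    · exact absurd ⟨hi, hcc⟩ (star cs hra h (w * σ c))
  exact ⟨hM, (descent_mul_iff cs hra hic hM).mp hi⟩

end Descents

section Walks

variable (R : B → B → Prop)

/-- A walk from `a` to `b` through the vertex list `p`. -/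
def IsWalk (a : B) (p : List B) (b : B) : Prop :=
  List.Chain R a p ∧ (a :: p).getLast? = some b

omit [Group W] in
lemma walk_nil (a : B) : IsWalk R a [] a := ⟨List.Chain.nil, rfl⟩

omit [Group W] in
lemma chain_concat : ∀ (p : List B) (a c b : B), List.Chain R a p →
    (a :: p).getLast? = some c → R c b → List.Chain R a (p ++ [b]) := by
  intro p
  induction p with
  | nil =>
    intro a c b _ hlast hR
    have : a = c := by simpa using hlast
    subst this
    simpa [List.Chain] using hR
  | cons x p' ih =>
    intro a c b hch hlast hR
    obtain ⟨hax, hch'⟩ := List.chain_cons.mp hch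
    rw [List.getLast?_cons_cons] at hlast
    exact List.chain_cons.mpr ⟨hax, ih x c b hch' hlast hR⟩

omit [Group W] in
lemma walk_tail {a c b : B} {p : List B} (hw : IsWalk R a p c) (hR : R c b) :
    IsWalk R a (p ++ [b]) b := by
  refine ⟨chain_concat R p a c b hw.1 hw.2 hR, ?_⟩
  rw [show a :: (p ++ [b]) = (a :: p) ++ [b] by rfl, List.getLast?_concat]

omit [Group W] in
lemma walk_trans : ∀ (q : List B) (p : List B) (a b c : B),
    IsWalk R a p b → IsWalk R b q c → IsWalk R a (p ++ q) c := by
  intro q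
  induction q with
  | nil =>
    intro p a b c h1 h2
    have : b = c := by simpa using h2.2
    subst this
    simpa using h1
  | cons x q' ih =>
    intro p a b c h1 h2
    obtain ⟨hbx, hch'⟩ := List.chain_cons.mp h2.1
    have h2' : IsWalk R x q' c := by
      refine ⟨hch', ?_⟩
      have := h2.2
      rwa [List.getLast?_cons_cons] at this
    have := ih (p ++ [x]) a x c (walk_tail R h1 hbx) h2'
    rwa [show (p ++ [x]) ++ q' = p ++ (x :: q') by simp] at this

omit [Group W] in
lemma walk_of_reach {a b : B} (h : Relation.ReflTransGen R a b) : ∃ p, IsWalk R a p b := by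
  induction h with
  | refl => exact ⟨[], walk_nil R a⟩
  | tail _ hstep ih =>
    obtain ⟨p, hp⟩ := ih
    exact ⟨p ++ [_], walk_tail R hp hstep⟩

end Walks

section Dynamics

variable (hra : ∀ s t : B, s ≠ t → M s t = 2 ∨ M s t = 0)
variable (R : B → B → Prop) (hR0 : ∀ a b, R a b → M a b = 0)

include hra hR0 in
lemma walkD : ∀ (L : List B) (h : B) (x : W), List.Chain R h L → cs.IsRightDescent x h →
    cs.IsRightDescent (x * π L) (L.getLast?.getD h) := by
  intro L
  induction L with
  | nil =>
    intro h x _ hx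
    simpa using hx
  | cons c L' ih =>
    intro h x hch hx
    obtain ⟨hhc, hch'⟩ := List.chain_cons.mp hch
    have hnc : ¬ cs.IsRightDescent x c := by
      intro hxc
      exact star cs hra (hR0 h c hhc) x ⟨hx, hxc⟩
    have hxc : cs.IsRightDescent (x * σ c) c := descent_mul_self cs hnc
    have hmul : x * π (c :: L') = (x * σ c) * π L' := by
      rw [cs.wordProd_cons, mul_assoc]
    rw [hmul]
    have := ih c (x * σ c) hch' hxc
    cases L' with
    | nil => simpa using this
    | cons d L'' =>
      rw [List.getLast?_cons_cons]
      obtain ⟨y, hy⟩ : ∃ y, (d :: L'').getLast? = some y := by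
        cases hq : (d :: L'').getLast? with
        | none => exact absurd (List.getLast?_eq_none_iff.mp hq) (by simp)
        | some y => exact ⟨y, rfl⟩
      rw [hy]
      rw [hy] at this
      exact this

include hra hR0 in
lemma walkC : ∀ (L : List B) (h : B) (x : W), List.Chain R h L → cs.IsRightDescent x h →
    ∀ s, cs.IsRightDescent (x * π L) s → s = L.getLast?.getD h ∨
      (cs.IsRightDescent x s ∧ M s h = 2 ∧ s ≠ h ∧ ∀ c ∈ L.dropLast, M s c = 2 ∧ s ≠ c) := by
  intro L
  induction L with
  | nil =>
    intro h x _ hx s hs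
    rw [cs.wordProd_nil, mul_one] at hs
    by_cases hsh : s = h
    · left
      simpa using hsh
    · right
      refine ⟨hs, ?_, hsh, by simp⟩
      rcases hra s h hsh with h2 | h0
      · exact h2
      · exact absurd ⟨hs, hx⟩ (star cs hra h0 x)
  | cons c L' ih =>
    intro h x hch hx s hs
    obtain ⟨hhc, hch'⟩ := List.chain_cons.mp hch
    have hnc : ¬ cs.IsRightDescent x c := by
      intro hxc
      exact star cs hra (hR0 h c hhc) x ⟨hx, hxc⟩
    have hxc : cs.IsRightDescent (x * σ c) c := descent_mul_self cs hnc
    have hmul : x * π (c :: L') = (x * σ c) * π L' := by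
      rw [cs.wordProd_cons, mul_assoc]
    rw [hmul] at hs
    rcases ih c (x * σ c) hch' hxc s hs with hleft | ⟨hdesc, hMsc, hsc, htail⟩
    · left
      cases L' with
      | nil => simpa using hleft
      | cons d L'' =>
        rw [List.getLast?_cons_cons]
        obtain ⟨y, hy⟩ : ∃ y, (d :: L'').getLast? = some y := by
          cases hq : (d :: L'').getLast? with
          | none => exact absurd (List.getLast?_eq_none_iff.mp hq) (by simp)
          | some y => exact ⟨y, rfl⟩
        rw [hy]
        rw [hy] at hleft
        exact hleft
    · right
      have hxs : cs.IsRightDescent x s := (descent_mul_iff cs hra hsc hMsc).mp hdesc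
      have hsh : s ≠ h := by
        intro hshe
        subst hshe
        rw [hR0 s c hhc] at hMsc
        exact absurd hMsc (by norm_num)
      have hMsh : M s h = 2 := by
        rcases hra s h hsh with h2 | h0
        · exact h2
        · exact absurd ⟨hxs, hx⟩ (star cs hra h0 x)
      refine ⟨hxs, hMsh, hsh, ?_⟩
      intro e he
      cases L' with
      | nil => simp at he
      | cons d L'' =>
        rw [List.dropLast_cons₂] at he
        rcases List.mem_cons.mp he with rfl | he'
        · exact ⟨hMsc, hsc⟩
        · exact htail e he'

end Dynamics

section Graph

variable (hra : ∀ s t : B, s ≠ t → M s t = 2 ∨ M s t = 0)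

omit [Group W] in
lemma reach_all (hirr : ¬ ∃ S₁ S₂ : Set B, S₁ ∪ S₂ = Set.univ ∧ Disjoint S₁ S₂ ∧
      S₁.Nonempty ∧ S₂.Nonempty ∧ ∀ s ∈ S₁, ∀ t ∈ S₂, M s t = 2)
    (hra : ∀ s t : B, s ≠ t → M s t = 2 ∨ M s t = 0) (a b : B) :
    Relation.ReflTransGen (fun x y => x ≠ y ∧ M x y = 0) a b := by
  by_contra hnot
  apply hirr
  set R : B → B → Prop := fun x y => x ≠ y ∧ M x y = 0 with hR
  refine ⟨{x | Relation.ReflTransGen R a x}, {x | Relation.ReflTransGen R a x}ᶜ,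
    Set.union_compl_self _, disjoint_compl_right, ⟨a, Relation.ReflTransGen.refl⟩,
    ⟨b, hnot⟩, ?_⟩
  intro s hs t ht
  have hst : s ≠ t := by
    intro h
    subst h
    exact ht hs
  rcases hra s t hst with h2 | h0
  · exact h2
  · exact absurd (Relation.ReflTransGen.tail hs ⟨hst, h0⟩) ht

end Graph

end RACGKey

open RACGKey in
/-- **Key Lemma.** Let `(W,S)` be a right-angled Coxeter system such that `W`
is infinite. If `(W,S)` is irreducible, then there exists `s₀ ∈ S` such that
`W^{{s₀}} = {w ∈ W : S(w) = {s₀}}` is quasi-dense in `W` with respect to the word metric. -/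
theorem key_lemma_quasiDense_of_irreducible {B W : Type*} [Finite B] [Group W] [Infinite W]
    {M : CoxeterMatrix B} (cs : CoxeterSystem M W)
    (hra : ∀ s t : B, s ≠ t → M s t = 2 ∨ M s t = 0)
    (hirr : ¬ ∃ S₁ S₂ : Set B, S₁ ∪ S₂ = Set.univ ∧ Disjoint S₁ S₂ ∧
        S₁.Nonempty ∧ S₂.Nonempty ∧ ∀ s ∈ S₁, ∀ t ∈ S₂, M s t = 2) :
    ∃ s₀ : B, ∃ N : ℕ, 0 < N ∧ ∀ w : W, ∃ v : W,
      {s : B | cs.IsRightDescent v s} = {s₀} ∧ cs.length (w⁻¹ * v) ≤ N := by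
  classical
  -- B is nonempty
  have hBne : Nonempty B := by
    by_contra h
    rw [not_nonempty_iff] at h
    have hall : ∀ w : W, w = 1 := by
      intro w
      obtain ⟨ω, rfl⟩ := cs.wordProd_surjective w
      cases ω with
      | nil => simp
      | cons i _ => exact (h.false i).elim
    obtain ⟨x, y, hxy⟩ := exists_pair_ne W
    exact hxy ((hall x).trans (hall y).symm)
  obtain ⟨b₀⟩ := hBne
  -- there is a second generator
  have hb1 : ∃ b₁ : B, b₁ ≠ b₀ := by
    by_contra h
    push_neg at h
    have hval : ∀ w : W, w = 1 ∨ w = cs.simple b₀ := by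
      intro w
      obtain ⟨ω, rfl⟩ := cs.wordProd_surjective w
      induction ω with
      | nil => left; simp
      | cons i ω ih =>
        rw [cs.wordProd_cons, h i]
        rcases ih with h1 | h1
        · right
          rw [h1, mul_one]
        · left
          rw [h1, cs.simple_mul_simple_self]
    have hfin : Finite W := by
      refine Finite.of_surjective (fun b : Bool => if b then (1 : W) else cs.simple b₀) ?_
      intro w
      rcases hval w with rfl | rfl
      · exact ⟨true, rfl⟩
      · exact ⟨false, rfl⟩
    exact not_finite W
  obtain ⟨b₁, hb₁⟩ := hb1
  set R : B → B → Prop := fun x y => x ≠ y ∧ M x y = 0 with hRdef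
  have hreach : ∀ a b : B, Relation.ReflTransGen R a b := reach_all hirr hra
  have hR0 : ∀ a b, R a b → M a b = 0 := fun a b h => h.2
  have hRsymm : ∀ a b, R a b → R b a := by
    intro a b h
    refine ⟨Ne.symm h.1, ?_⟩
    have := Matrix.IsSymm.apply M.isSymm a b
    rw [this]
    exact h.2
  -- a neighbour of b₀
  obtain ⟨n₀, hn₀⟩ : ∃ n₀, R b₀ n₀ := by
    rcases Relation.ReflTransGen.cases_head (hreach b₀ b₁) with h | ⟨c, hc, _⟩
    · exact absurd h.symm hb₁
    · exact ⟨c, hc⟩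
  -- spanning closed walk
  haveI := Fintype.ofFinite B
  have hspan : ∀ cl : List B, ∃ L, IsWalk R b₀ L b₀ ∧ ∀ c ∈ cl, c = b₀ ∨ c ∈ L := by
    intro cl
    induction cl with
    | nil => exact ⟨[], walk_nil R b₀, by simp⟩
    | cons c cl' ih =>
      obtain ⟨L', hL', hmem'⟩ := ih
      obtain ⟨p, hp⟩ := walk_of_reach R (hreach b₀ c)
      obtain ⟨q, hq⟩ := walk_of_reach R (hreach c b₀)
      refine ⟨(p ++ q) ++ L', walk_trans R L' (p ++ q) b₀ b₀ b₀
        (walk_trans R q p b₀ c b₀ hp hq) hL', ?_⟩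
      intro e he
      rcases List.mem_cons.mp he with rfl | he'
      · have hmem : e ∈ b₀ :: p := List.mem_of_mem_getLast? (by rw [hp.2]; rfl)
        rcases List.mem_cons.mp hmem with h | h
        · exact Or.inl h
        · exact Or.inr (by simp [h])
      · rcases hmem' e he' with h | h
        · exact Or.inl h
        · exact Or.inr (by simp [h])
  obtain ⟨L₀, hL₀walk, hL₀mem⟩ := hspan (Finset.univ.toList)
  -- final walk: append a closed hop so that b₀ occurs in the interior list
  set L : List B := L₀ ++ [n₀, b₀] with hLdef
  have hhop : IsWalk R b₀ [n₀, b₀] b₀ := by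
    constructor
    · exact List.chain_cons.mpr ⟨hn₀, List.chain_cons.mpr ⟨hRsymm _ _ hn₀, List.Chain.nil⟩⟩
    · rfl
  have hLwalk : IsWalk R b₀ L b₀ := walk_trans R [n₀, b₀] L₀ b₀ b₀ b₀ hL₀walk hhop
  have hLlast : L.getLast? = some b₀ := by
    rw [hLdef, show L₀ ++ [n₀, b₀] = (L₀ ++ [n₀]) ++ [b₀] by simp]
    exact List.getLast?_concat
  have hLdrop : L.dropLast = L₀ ++ [n₀] := by
    rw [hLdef, show L₀ ++ [n₀, b₀] = (L₀ ++ [n₀]) ++ [b₀] by simp]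
    exact List.dropLast_concat
  have hLspan : ∀ c : B, c ∈ L := by
    intro c
    rcases hL₀mem c (by simp) with rfl | h
    · rw [hLdef]
      simp
    · rw [hLdef]
      simp [h]
  refine ⟨b₀, L.length + 1, by omega, ?_⟩
  intro w
  set w' : W := if cs.IsRightDescent w b₀ then w else w * cs.simple b₀ with hw'def
  have hw' : cs.IsRightDescent w' b₀ := by
    rw [hw'def]
    split_ifs with hd
    · exact hd
    · exact descent_mul_self cs hd
  refine ⟨w' * cs.wordProd L, ?_, ?_⟩
  · ext s
    simp only [Set.mem_setOf_eq, Set.mem_singleton_iff]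
    constructor
    · intro hs
      rcases walkC cs hra R hR0 L b₀ w' hLwalk.1 hw' s hs with hleft | ⟨_, _, hsb₀, htail⟩
      · rw [hLlast] at hleft
        exact hleft
      · exfalso
        have hsL := hLspan s
        rw [hLdef, show L₀ ++ [n₀, b₀] = (L₀ ++ [n₀]) ++ [b₀] by simp] at hsL
        rcases List.mem_append.mp hsL with h | h
        · exact (htail s (by rw [hLdrop]; exact h)).2 rfl
        · exact hsb₀ (List.mem_singleton.mp h)
    · intro hs
      rw [hs]
      have := walkD cs hra R hR0 L b₀ w' hLwalk.1 hw'
      rw [hLlast] at this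
      exact this
  · have hlen1 : cs.length (w⁻¹ * w') ≤ 1 := by
      rw [hw'def]
      split_ifs
      · rw [inv_mul_cancel]
        simp
      · rw [← mul_assoc, inv_mul_cancel, one_mul]
        rw [cs.length_simple]
    calc cs.length (w⁻¹ * (w' * cs.wordProd L)) = cs.length ((w⁻¹ * w') * cs.wordProd L) := by
          rw [mul_assoc]
    _ ≤ cs.length (w⁻¹ * w') + cs.length (cs.wordProd L) := cs.length_mul_le _ _
    _ ≤ 1 + L.length := by
        have := cs.length_wordProd_le L
        omega
    _ ≤ L.length + 1 := by omega
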